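/- Let (F,v) be a c-Bessel mapping for H with synthesis operator T_{F,v}. Then (F,v) is a c-fusion frame for H if and only if there exist a c-Bessel mapping (G,w) for H and a bounded operator Q: L²(X,F) → L²(X,G) such that T_{G,w} Q T*_{F,v} = I_H. -/

import Mathlib

set_option maxHeartbeats 1000000
set_option synthInstance.maxHeartbeats 400000

open MeasureTheory
open scoped ENNReal InnerProductSpace

noncomputable section

variable {H : Type} [NormedAddCommGroup H] [InnerProductSpace ℂ H] [CompleteSpace H]
variable {X : Type} [MeasurableSpace X]

open scoped Classical in
def projFn (W : Submodule ℂ H) (h : H) : H :=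
  if hW : IsClosed (W : Set H) then
    haveI : CompleteSpace W := hW.completeSpace_coe
    (W.orthogonalProjectionOnto h : H)
  else 0

structure IsCBessel (μ : Measure X) (F : X → Submodule ℂ H) (v : X → ℝ) (B : ℝ) : Prop where
  closed : ∀ x, IsClosed ((F x) : Set H)
  meas : ∀ h : H, AEStronglyMeasurable (fun x => projFn (F x) h) μ
  bessel : ∀ h : H,
    ∫⁻ x, ENNReal.ofReal ((v x) ^ 2 * ‖projFn (F x) h‖ ^ 2) ∂μ ≤ ENNReal.ofReal (B * ‖h‖ ^ 2)

structure IsCFusionFrame (μ : Measure X) (F : X → Submodule ℂ H) (v : X → ℝ)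
    (A B : ℝ) extends IsCBessel μ F v B : Prop where
  posA : 0 < A
  lower : ∀ h : H,
    ENNReal.ofReal (A * ‖h‖ ^ 2) ≤ ∫⁻ x, ENNReal.ofReal ((v x) ^ 2 * ‖projFn (F x) h‖ ^ 2) ∂μ

def L2F (μ : Measure X) (F : X → Submodule ℂ H) : Submodule ℂ (Lp H 2 μ) where
  carrier := {f | ∀ᵐ x ∂μ, f x ∈ F x}
  add_mem' := by
    intro f g hf hg
    filter_upwards [hf, hg, Lp.coeFn_add f g] with x h1 h2 h3
    rw [h3]
    exact add_mem h1 h2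
  zero_mem' := by
    filter_upwards [Lp.coeFn_zero H 2 μ] with x h1
    rw [h1]; exact zero_mem _
  smul_mem' := by
    intro c f hf
    filter_upwards [hf, Lp.coeFn_smul c f] with x h1 h2
    rw [h2]
    exact Submodule.smul_mem _ _ h1

def IsSynthesis (μ : Measure X) (F : X → Submodule ℂ H) (v : X → ℝ)
    (T : L2F μ F →L[ℂ] H) : Prop :=
  ∀ (f : L2F μ F) (h : H),
    (⟪T f, h⟫_ℂ : ℂ) = ∫ x, (v x : ℂ) * (⟪(↑f : Lp H 2 μ) x, h⟫_ℂ : ℂ) ∂μ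

-- Auxiliary lemmas

lemma projFn_mem (W : Submodule ℂ H) (h : H) : projFn W h ∈ W := by
  rw [projFn]
  split
  · exact Submodule.coe_mem _
  · exact zero_mem _

lemma inner_projFn_of_mem (W : Submodule ℂ H) (hW : IsClosed (W : Set H)) {u : H}
    (hu : u ∈ W) (h : H) : ⟪u, projFn W h⟫_ℂ = ⟪u, h⟫_ℂ := by
  haveI : CompleteSpace W := hW.completeSpace_coe
  rw [projFn, dif_pos hW]
  exact (W.coe_inner ⟨u, hu⟩ _).symm.trans
    (Submodule.inner_orthogonalProjection_eq_of_mem_left (K := W) (⟨u, hu⟩ : W) h)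

variable {μ : Measure X} {F : X → Submodule ℂ H} {v : X → ℝ} {B : ℝ}

lemma aux_sqnorm (hv0 : ∀ x, 0 ≤ v x) (h : H) (x : X) :
    ‖(v x : ℂ) • projFn (F x) h‖ ^ 2 = v x ^ 2 * ‖projFn (F x) h‖ ^ 2 := by
  rw [norm_smul, Complex.norm_real, Real.norm_eq_abs, abs_of_nonneg (hv0 x), mul_pow]

lemma aux_memLp (hv : Measurable v) (hv0 : ∀ x, 0 ≤ v x) (hB : IsCBessel μ F v B) (h : H) :
    MemLp (fun x => (v x : ℂ) • projFn (F x) h) 2 μ := by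
  have hm : AEStronglyMeasurable (fun x => (v x : ℂ) • projFn (F x) h) μ :=
    (Complex.measurable_ofReal.comp hv).aestronglyMeasurable.smul (hB.meas h)
  rw [memLp_two_iff_integrable_sq_norm hm]
  refine ⟨hm.norm.pow 2, ?_⟩
  rw [hasFiniteIntegral_iff_ofReal (Filter.Eventually.of_forall fun x => by positivity)]
  calc ∫⁻ x, ENNReal.ofReal (‖(v x : ℂ) • projFn (F x) h‖ ^ 2) ∂μ
      = ∫⁻ x, ENNReal.ofReal (v x ^ 2 * ‖projFn (F x) h‖ ^ 2) ∂μ := by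
        refine lintegral_congr fun x => ?_
        rw [aux_sqnorm hv0]
    _ ≤ ENNReal.ofReal (B * ‖h‖ ^ 2) := hB.bessel h
    _ < ⊤ := ENNReal.ofReal_lt_top

lemma aux_integrable (hv : Measurable v) (hv0 : ∀ x, 0 ≤ v x) (hB : IsCBessel μ F v B)
    (h : H) : Integrable (fun x => v x ^ 2 * ‖projFn (F x) h‖ ^ 2) μ := by
  have := (memLp_two_iff_integrable_sq_norm (aux_memLp hv hv0 hB h).1).mp
    (aux_memLp hv hv0 hB h)
  exact this.congr (Filter.Eventually.of_forall fun x => aux_sqnorm hv0 h x)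

/-- The adjoint of the synthesis operator, identified. -/
lemma aux_adjoint_eq (hv : Measurable v) (hv0 : ∀ x, 0 ≤ v x) (hB : IsCBessel μ F v B)
    [CompleteSpace ↥(L2F μ F)] (T : L2F μ F →L[ℂ] H) (hT : IsSynthesis μ F v T) (h : H) :
    ∃ hg : ((aux_memLp hv hv0 hB h).toLp _) ∈ L2F μ F,
      ContinuousLinearMap.adjoint T h = ⟨(aux_memLp hv hv0 hB h).toLp _, hg⟩ := by
  set g : Lp H 2 μ := (aux_memLp hv hv0 hB h).toLp _ with hgdef
  have hgc : g =ᵐ[μ] fun x => (v x : ℂ) • projFn (F x) h := MemLp.coeFn_toLp _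
  have hg : g ∈ L2F μ F := by
    filter_upwards [hgc] with x hx
    rw [hx]
    exact Submodule.smul_mem _ _ (projFn_mem _ _)
  refine ⟨hg, ?_⟩
  set e : L2F μ F := ⟨g, hg⟩ with hedef
  have horto : ∀ f : L2F μ F, ⟪f, ContinuousLinearMap.adjoint T h - e⟫_ℂ = 0 := by
    intro f
    rw [inner_sub_right, sub_eq_zero, ContinuousLinearMap.adjoint_inner_right, hT f h]
    rw [Submodule.coe_inner, L2.inner_def]
    refine integral_congr_ae ?_
    filter_upwards [f.2, hgc] with x hfx hgx
    rw [hgx, inner_smul_right, inner_projFn_of_mem _ (hB.closed x) hfx h]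
  have h0 := horto (ContinuousLinearMap.adjoint T h - e)
  replace h0 := (inner_self_eq_zero (𝕜 := ℂ) (E := ↥(L2F μ F))).mp h0
  exact sub_eq_zero.mp h0

/-- The norm of the adjoint gives the frame integral. -/
lemma aux_adjoint_norm (hv : Measurable v) (hv0 : ∀ x, 0 ≤ v x) (hB : IsCBessel μ F v B)
    [CompleteSpace ↥(L2F μ F)] (T : L2F μ F →L[ℂ] H) (hT : IsSynthesis μ F v T) (h : H) :
    ∫⁻ x, ENNReal.ofReal ((v x) ^ 2 * ‖projFn (F x) h‖ ^ 2) ∂μ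
      = ENNReal.ofReal (‖ContinuousLinearMap.adjoint T h‖ ^ 2) := by
  obtain ⟨hg, heq⟩ := aux_adjoint_eq hv hv0 hB T hT h
  set g : Lp H 2 μ := (aux_memLp hv hv0 hB h).toLp _ with hgdef
  have hgc : g =ᵐ[μ] fun x => (v x : ℂ) • projFn (F x) h := MemLp.coeFn_toLp _
  have hnorm : ‖ContinuousLinearMap.adjoint T h‖ = ‖g‖ := by rw [heq]; rfl
  have hre : ‖g‖ ^ 2 = ∫ x, v x ^ 2 * ‖projFn (F x) h‖ ^ 2 ∂μ := by
    rw [← inner_self_eq_norm_sq (𝕜 := ℂ), L2.inner_def,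
      ← integral_re (L2.integrable_inner g g)]
    refine integral_congr_ae ?_
    filter_upwards [hgc] with x hx
    rw [hx, inner_self_eq_norm_sq, aux_sqnorm hv0]
  rw [hnorm, hre,
    ofReal_integral_eq_lintegral_ofReal (aux_integrable hv hv0 hB h)
      (Filter.Eventually.of_forall fun x => by positivity)]

lemma aux_bound {μ : Measure X} {F G : X → Submodule ℂ H} [CompleteSpace ↥(L2F μ F)]
    (T : L2F μ F →L[ℂ] H) (TG : L2F μ G →L[ℂ] H)
    (Q : (L2F μ F : Type) →L[ℂ] (L2F μ G : Type))
    (hQ : TG.comp (Q.comp (ContinuousLinearMap.adjoint T)) = ContinuousLinearMap.id ℂ H) :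
    ∀ h : H, ‖h‖ ≤ ‖TG.comp Q‖ * ‖ContinuousLinearMap.adjoint T h‖ := by
  have hle : ∀ h : H, ‖(TG.comp Q) ((ContinuousLinearMap.adjoint T) h)‖
      ≤ ‖TG.comp Q‖ * ‖(ContinuousLinearMap.adjoint T) h‖ := fun h => (TG.comp Q).le_opNorm _
  intro h
  have happ : (TG.comp Q) (ContinuousLinearMap.adjoint T h) = h := by
    have h1 := congrFun (congrArg DFunLike.coe hQ) h
    simpa using h1
  calc ‖h‖ = ‖(TG.comp Q) (ContinuousLinearMap.adjoint T h)‖ := (congrArg norm happ).symm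
    _ ≤ ‖TG.comp Q‖ * ‖ContinuousLinearMap.adjoint T h‖ := hle h

theorem statement4 {μ : Measure X} {F : X → Submodule ℂ H} {v : X → ℝ} {B : ℝ}
    (hv : Measurable v) (hv0 : ∀ x, 0 ≤ v x) (hvne : ∀ᵐ x ∂μ, v x ≠ 0)
    (hB : IsCBessel μ F v B) [CompleteSpace ↥(L2F μ F)]
    (T : L2F μ F →L[ℂ] H) (hT : IsSynthesis μ F v T) :
    (∃ A : ℝ, IsCFusionFrame μ F v A B) ↔
      ∃ (G : X → Submodule ℂ H) (w : X → ℝ) (BG : ℝ), IsCBessel μ G w BG ∧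
        ∃ TG : L2F μ G →L[ℂ] H, IsSynthesis μ G w TG ∧
          ∃ Q : (L2F μ F : Type) →L[ℂ] (L2F μ G : Type),
            TG.comp (Q.comp (ContinuousLinearMap.adjoint T)) = ContinuousLinearMap.id ℂ H := by
  haveI nsF : NormedSpace ℂ ↥(L2F μ F) := inferInstance
  have hkey : ∀ h : H, ∫⁻ x, ENNReal.ofReal ((v x) ^ 2 * ‖projFn (F x) h‖ ^ 2) ∂μ
      = ENNReal.ofReal (‖ContinuousLinearMap.adjoint T h‖ ^ 2) := aux_adjoint_norm hv hv0 hB T hT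
  constructor
  · rintro ⟨A, hA⟩
    refine ⟨F, v, B, hB, T, hT, ?_⟩
    set T' := ContinuousLinearMap.adjoint T with hT'
    set S := T.comp T' with hS
    have hST : ∀ x : H, T (T' x) = S x := fun x => rfl
    have hTT : ∀ h : H, ‖T' h‖ ^ 2 = RCLike.re ⟪h, S h⟫_ℂ := by
      intro h
      have h1 : (⟪T' h, T' h⟫_ℂ : ℂ) = ⟪h, S h⟫_ℂ := by
        rw [hT', ContinuousLinearMap.adjoint_inner_left]
        rfl
      rw [← inner_self_eq_norm_sq (𝕜 := ℂ), h1]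
    have hlow : ∀ h : H, A * ‖h‖ ^ 2 ≤ ‖T' h‖ ^ 2 := by
      intro h
      have h1 := hA.lower h
      rw [hkey h] at h1
      exact (ENNReal.ofReal_le_ofReal_iff (by positivity)).mp h1
    clear_value S T'
    clear hS hT' hkey
    have hSh : ∀ h : H, A * ‖h‖ ≤ ‖S h‖ := by
      intro h
      rcases eq_or_lt_of_le (norm_nonneg h) with h0 | h0
      · rw [← h0, mul_zero]
        exact norm_nonneg _
      · have h2 : A * ‖h‖ ^ 2 ≤ ‖h‖ * ‖S h‖ :=
          (hlow h).trans ((hTT h).le.trans (re_inner_le_norm _ _))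
        nlinarith
    have hinj : LinearMap.ker (S : H →ₗ[ℂ] H) = ⊥ := by
      rw [LinearMap.ker_eq_bot']
      intro h hh
      have h5 := hSh h
      rw [show S h = 0 from hh, norm_zero] at h5
      have h6 : ‖h‖ ≤ 0 := by nlinarith [hA.posA]
      exact norm_le_zero_iff.mp h6
    have hanti : AntilipschitzWith (A⁻¹.toNNReal) S := by
      refine S.antilipschitz_of_bound fun x => ?_
      rw [Real.coe_toNNReal _ (inv_nonneg.mpr hA.posA.le)]
      rw [← mul_le_mul_iff_right₀ hA.posA, ← mul_assoc, mul_inv_cancel₀ hA.posA.ne', one_mul]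
      exact hSh x
    have hclosed : IsClosed (LinearMap.range (S : H →ₗ[ℂ] H) : Set H) :=
      (hanti.isClosedEmbedding S.uniformContinuous).isClosed_range
    have hsurj : LinearMap.range (S : H →ₗ[ℂ] H) = ⊤ := by
      haveI : CompleteSpace ↥(LinearMap.range (S : H →ₗ[ℂ] H)) := hclosed.completeSpace_coe
      rw [← Submodule.orthogonal_eq_bot_iff, Submodule.eq_bot_iff]
      intro h hh
      have hz : ⟪S h, h⟫_ℂ = 0 :=
        (Submodule.mem_orthogonal _ h).mp hh (S h) (LinearMap.mem_range_self _ h)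
      have hz2 : ⟪h, S h⟫_ℂ = 0 := by
        rw [← inner_conj_symm, hz, map_zero]
      have h3 := (hlow h).trans (hTT h).le
      rw [hz2, map_zero] at h3
      have h4 : ‖h‖ ^ 2 ≤ 0 := by nlinarith [hA.posA]
      have h5 : ‖h‖ = 0 := by nlinarith [sq_nonneg ‖h‖, norm_nonneg h]
      exact norm_eq_zero.mp h5
    set e := ContinuousLinearEquiv.ofBijective S hinj hsurj with he
    have hSapp : ∀ y : H, S y = e y := fun y => rfl
    refine ⟨(T'.comp (e.symm : H →L[ℂ] H)).comp ((e.symm : H →L[ℂ] H).comp T), ?_⟩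
    ext h
    simp only [ContinuousLinearMap.coe_comp', Function.comp_apply,
      ContinuousLinearMap.coe_id', id_eq, ContinuousLinearEquiv.coe_coe]
    calc T (T' (e.symm (e.symm (T (T' h)))))
        = S (e.symm (e.symm (S h))) := by rw [hST, hST]
      _ = e (e.symm (e.symm (e h))) := by rw [hSapp, hSapp]
      _ = h := by rw [e.symm_apply_apply, e.apply_symm_apply]
  · rintro ⟨G, w, BG, hG, TG, hTG, Q, hQ⟩
    obtain ⟨c, hc⟩ : ∃ c : ℝ, ∀ h : H, ‖h‖ ≤ c * ‖ContinuousLinearMap.adjoint T h‖ :=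
      ⟨_, aux_bound T TG Q hQ⟩
    refine ⟨1 / (c ^ 2 + 1), hB, by positivity, fun h => ?_⟩
    rw [hkey h]
    refine ENNReal.ofReal_le_ofReal ?_
    rw [div_mul_eq_mul_div, div_le_iff₀ (by positivity)]
    nlinarith [hc h, norm_nonneg h, norm_nonneg (ContinuousLinearMap.adjoint T h),
      sq_nonneg (c * ‖ContinuousLinearMap.adjoint T h‖ - ‖h‖),
      sq_nonneg (‖ContinuousLinearMap.adjoint T h‖)]
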